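/- arXiv:2007.11873 — 4 statements merged into one kernel-verified Lean document; each statement's English description precedes it below -/
import Mathlib

section
/- For integers r, m ≥ 0 and complex w with w, w+1, …, w+m nonzero, ((-1)^r/r!) d^r/dw^r (1/(w)_{m+1}) = (1/(w)_{m+1}) Σ_{0≤m₁≤⋯≤m_r≤m} Π_{i=1}^r 1/(mᵢ+w). -/
open scoped BigOperators

namespace Stmt8Aux
open Finset

noncomputable def D (m r : ℕ) (z : ℂ) : ℂ :=
  ∑ k ∈ Finset.Nat.antidiagonalTuple (m + 1) r,
    ∏ j : Fin (m + 1), (((j : ℕ) : ℂ) + z)⁻¹ ^ (k j + 1)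

lemma P_eq (n : ℕ) (z : ℂ) :
    (ascPochhammer ℂ n).eval z = ∏ j : Fin n, (((j : ℕ) : ℂ) + z) := by
  induction n with
  | zero => simp
  | succ n ih =>
    rw [ascPochhammer_succ_eval, ih, Fin.prod_univ_castSucc]
    simp [add_comm]

lemma key (m r : ℕ) (g : (Fin (m + 1) → ℕ) → ℂ) :
    ∑ k ∈ Finset.Nat.antidiagonalTuple (m + 1) r,
      ∑ j : Fin (m + 1), ((k j : ℂ) + 1) * g (Function.update k j (k j + 1)) =
    ((r : ℂ) + 1) * ∑ k ∈ Finset.Nat.antidiagonalTuple (m + 1) (r + 1), g k := by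
  rw [Finset.sum_comm]
  have inner : ∀ j : Fin (m + 1),
      ∑ k ∈ Finset.Nat.antidiagonalTuple (m + 1) r,
        ((k j : ℂ) + 1) * g (Function.update k j (k j + 1)) =
      ∑ k ∈ Finset.Nat.antidiagonalTuple (m + 1) (r + 1), (k j : ℂ) * g k := by
    intro j
    rw [← Finset.sum_filter_of_ne (s := Finset.Nat.antidiagonalTuple (m + 1) (r + 1))
      (p := fun k => k j ≠ 0) (fun k _ h h0 => h (by simp [h0]))]
    refine Finset.sum_nbij' (fun k => Function.update k j (k j + 1))
      (fun k => Function.update k j (k j - 1)) ?_ ?_ ?_ ?_ ?_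
    · intro k hk
      rw [Finset.Nat.mem_antidiagonalTuple] at hk
      simp only [Finset.mem_filter, Finset.Nat.mem_antidiagonalTuple]
      have h1 := Finset.add_sum_erase univ k (mem_univ j)
      have h2 := Finset.add_sum_erase univ (Function.update k j (k j + 1)) (mem_univ j)
      have h3 : ∑ i ∈ univ.erase j, Function.update k j (k j + 1) i
          = ∑ i ∈ univ.erase j, k i :=
        Finset.sum_congr rfl fun i hi => by
          rw [Function.update_of_ne (Finset.ne_of_mem_erase hi)]
      rw [Function.update_self, h3] at h2
      constructor
      · omega
      · simp [Function.update_self]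
    · intro k hk
      simp only [Finset.mem_filter, Finset.Nat.mem_antidiagonalTuple] at hk
      rw [Finset.Nat.mem_antidiagonalTuple]
      have h1 := Finset.add_sum_erase univ k (mem_univ j)
      have h2 := Finset.add_sum_erase univ (Function.update k j (k j - 1)) (mem_univ j)
      have h3 : ∑ i ∈ univ.erase j, Function.update k j (k j - 1) i
          = ∑ i ∈ univ.erase j, k i :=
        Finset.sum_congr rfl fun i hi => by
          rw [Function.update_of_ne (Finset.ne_of_mem_erase hi)]
      rw [Function.update_self, h3] at h2
      omega
    · intro k hk
      rw [Function.update_self, Function.update_idem]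
      simp [Function.update_eq_self]
    · intro k hk
      simp only [Finset.mem_filter] at hk
      rw [Function.update_self, Function.update_idem]
      have : k j - 1 + 1 = k j := by omega
      rw [this, Function.update_eq_self]
    · intro k hk
      rw [Function.update_self]
      push_cast
      ring_nf
  rw [Finset.sum_congr rfl fun j _ => inner j, Finset.sum_comm]
  rw [Finset.mul_sum]
  refine Finset.sum_congr rfl fun k hk => ?_
  rw [Finset.Nat.mem_antidiagonalTuple] at hk
  rw [← Finset.sum_mul]
  congr 1
  rw [← Nat.cast_sum, hk]
  push_cast; ring


def U (m : ℕ) : Set ℂ := {z : ℂ | ∀ j : Fin (m + 1), ((j : ℕ) : ℂ) + z ≠ 0}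

lemma U_open (m : ℕ) : IsOpen (U m) := by
  have : U m = ⋂ j : Fin (m + 1), {z : ℂ | ((j : ℕ) : ℂ) + z ≠ 0} := by
    ext z; simp [U, Set.mem_iInter]
  rw [this]
  refine isOpen_iInter_of_finite fun j => ?_
  have : {z : ℂ | ((j : ℕ) : ℂ) + z ≠ 0} = (fun z : ℂ => ((j : ℕ) : ℂ) + z) ⁻¹' {0}ᶜ := rfl
  rw [this]
  exact (isOpen_compl_singleton).preimage (continuous_const.add continuous_id)

lemma hasDerivAt_term (m : ℕ) (k : Fin (m + 1) → ℕ) {z : ℂ} (hz : z ∈ U m) :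
    HasDerivAt (fun z => ∏ j : Fin (m + 1), (((j : ℕ) : ℂ) + z)⁻¹ ^ (k j + 1))
      (-∑ j : Fin (m + 1), ((k j : ℂ) + 1) *
        ∏ j' : Fin (m + 1), (((j' : ℕ) : ℂ) + z)⁻¹ ^ (Function.update k j (k j + 1) j' + 1)) z := by
  have hfac : ∀ j : Fin (m + 1),
      HasDerivAt (fun z => (((j : ℕ) : ℂ) + z)⁻¹ ^ (k j + 1))
        (-(((k j : ℂ) + 1) * (((j : ℕ) : ℂ) + z)⁻¹ ^ (k j + 2))) z := by
    intro j
    have h1 : HasDerivAt (fun z : ℂ => ((j : ℕ) : ℂ) + z) 1 z := (hasDerivAt_id z).const_add _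
    have h2 := (h1.inv (hz j)).pow (k j + 1)
    convert h2 using 1
    · rfl
    · rfl
    · rfl
    simp only [Pi.inv_apply]
    push_cast
    rw [div_eq_mul_inv, ← inv_pow]
    ring
  have := HasDerivAt.finset_prod (u := (univ : Finset (Fin (m + 1))))
    (f := fun j z => (((j : ℕ) : ℂ) + z)⁻¹ ^ (k j + 1))
    (f' := fun j => -(((k j : ℂ) + 1) * (((j : ℕ) : ℂ) + z)⁻¹ ^ (k j + 2)))
    (fun j _ => hfac j)
  convert this using 1
  · rfl
  · rfl
  · ext x; simp [Finset.prod_apply]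
  rw [← Finset.sum_neg_distrib]
  refine Finset.sum_congr rfl fun j _ => ?_
  rw [smul_eq_mul]
  have hprod : ∏ j' : Fin (m + 1), (((j' : ℕ) : ℂ) + z)⁻¹ ^ (Function.update k j (k j + 1) j' + 1)
      = (((j : ℕ) : ℂ) + z)⁻¹ ^ (k j + 2) * ∏ j' ∈ univ.erase j, (((j' : ℕ) : ℂ) + z)⁻¹ ^ (k j' + 1) := by
    rw [← Finset.mul_prod_erase univ _ (mem_univ j), Function.update_self]
    congr 1
    refine Finset.prod_congr rfl fun j' hj' => ?_
    rw [Function.update_of_ne (Finset.ne_of_mem_erase hj')]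
  rw [hprod]; ring



lemma hasDerivAt_D (m r : ℕ) {z : ℂ} (hz : z ∈ U m) :
    HasDerivAt (D m r) (-(((r : ℂ) + 1) * D m (r + 1) z)) z := by
  have h := HasDerivAt.sum (u := Finset.Nat.antidiagonalTuple (m + 1) r)
    (A := fun k z => ∏ j : Fin (m + 1), (((j : ℕ) : ℂ) + z)⁻¹ ^ (k j + 1))
    (A' := fun k => -∑ j : Fin (m + 1), ((k j : ℂ) + 1) *
        ∏ j' : Fin (m + 1), (((j' : ℕ) : ℂ) + z)⁻¹ ^ (Function.update k j (k j + 1) j' + 1))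
    (fun k _ => hasDerivAt_term m k hz)
  convert h using 1
  · rfl
  · rfl
  · ext x; simp [D, Finset.sum_apply]
  rw [Finset.sum_neg_distrib, neg_inj, D]
  exact (key m r (fun k => ∏ j : Fin (m + 1), (((j : ℕ) : ℂ) + z)⁻¹ ^ (k j + 1))).symm

lemma iter (m r : ℕ) : ∀ w ∈ U m,
    iteratedDeriv r (fun z => ∏ j : Fin (m + 1), (((j : ℕ) : ℂ) + z)⁻¹) w
      = (-1 : ℂ) ^ r * (r.factorial : ℂ) * D m r w := by
  induction r with
  | zero =>
    intro w hw
    rw [iteratedDeriv_zero]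
    simp only [pow_zero, Nat.factorial_zero, Nat.cast_one, one_mul, D,
      Finset.Nat.antidiagonalTuple_zero_right, Finset.sum_singleton]
    simp
  | succ r ih =>
    intro w hw
    rw [iteratedDeriv_succ]
    have hev : iteratedDeriv r (fun z => ∏ j : Fin (m + 1), (((j : ℕ) : ℂ) + z)⁻¹)
        =ᶠ[nhds w] fun z => (-1 : ℂ) ^ r * (r.factorial : ℂ) * D m r z :=
      Filter.eventually_of_mem ((U_open m).mem_nhds hw) (fun z hz => ih z hz)
    rw [hev.deriv_eq]
    have hd := (hasDerivAt_D m r hw).const_mul ((-1 : ℂ) ^ r * (r.factorial : ℂ))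
    rw [hd.deriv]
    rw [Nat.factorial_succ]
    push_cast
    ring

lemma bridge (r : ℕ) (t : Fin r → ℕ) (a : ℕ) :
    (univ.filter fun i => t i = a).card = List.count a (List.ofFn t) := by
  rw [List.ofFn_eq_map, List.count_eq_countP, List.countP_map]
  rw [Finset.card_def, Finset.filter_val, ← Multiset.countP_eq_card_filter]
  rw [Fin.univ_def]
  rw [show ({ val := ↑(List.finRange r), nodup := by exact (List.nodup_finRange r) } :
    Finset (Fin r)).val = (↑(List.finRange r) : Multiset (Fin r)) from rfl, Multiset.coe_countP]
  congr 1

lemma mono_ext {r m : ℕ} {t t' : Fin r → ℕ} (ht : Monotone t) (ht' : Monotone t')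
    (hb : ∀ i, t i ≤ m) (hb' : ∀ i, t' i ≤ m)
    (hc : ∀ j : Fin (m + 1),
      (univ.filter fun i => t i = (j : ℕ)).card = (univ.filter fun i => t' i = (j : ℕ)).card) :
    t = t' := by
  have hperm : List.Perm (List.ofFn t) (List.ofFn t') := by
    rw [List.perm_iff_count]
    intro a
    by_cases ha : a ≤ m
    · have := hc ⟨a, Nat.lt_succ_of_le ha⟩
      rw [bridge, bridge] at this
      exact this
    · rw [List.count_eq_zero_of_not_mem, List.count_eq_zero_of_not_mem]
      · intro hmem
        rw [List.mem_ofFn] at hmem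
        obtain ⟨i, hi⟩ := hmem
        exact ha (hi ▸ hb' i)
      · intro hmem
        rw [List.mem_ofFn] at hmem
        obtain ⟨i, hi⟩ := hmem
        exact ha (hi ▸ hb i)
  have heq : List.ofFn t = List.ofFn t' :=
    List.Perm.eq_of_sortedLE (List.sortedLE_ofFn_iff.2 ht) (List.sortedLE_ofFn_iff.2 ht') hperm
  exact List.ofFn_injective heq

-- the sorted list built from counts
def L (k : ℕ → ℕ) (n : ℕ) : List ℕ := (List.range n).flatMap fun j => List.replicate (k j) j

lemma L_mem (k : ℕ → ℕ) (n : ℕ) : ∀ x ∈ L k n, x < n := by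
  intro x hx
  rw [L, List.mem_flatMap] at hx
  obtain ⟨j, hj, hx⟩ := hx
  rw [List.eq_of_mem_replicate hx]
  exact List.mem_range.1 hj

lemma L_sorted (k : ℕ → ℕ) (n : ℕ) : (L k n).Pairwise (· ≤ ·) := by
  induction n with
  | zero => simp [L]
  | succ n ih =>
    rw [L, List.range_succ, List.flatMap_append]
    rw [List.pairwise_append]
    refine ⟨ih, ?_, ?_⟩
    · simp only [List.flatMap_cons, List.flatMap_nil, List.append_nil]
      exact List.pairwise_replicate.2 (Or.inr le_rfl)
    · intro a ha b hb
      simp only [List.flatMap_cons, List.flatMap_nil, List.append_nil] at hb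
      rw [List.eq_of_mem_replicate hb]
      exact le_of_lt (L_mem k n a ha)

lemma L_count (k : ℕ → ℕ) (n : ℕ) (a : ℕ) :
    List.count a (L k n) = if a < n then k a else 0 := by
  induction n with
  | zero => simp [L]
  | succ n ih =>
    rw [L, List.range_succ, List.flatMap_append, List.count_append]
    simp only [List.flatMap_cons, List.flatMap_nil, List.append_nil]
    rw [show (List.range n).flatMap (fun j => List.replicate (k j) j) = L k n from rfl, ih,
      List.count_replicate]
    by_cases h : a < n
    · simp [h, Nat.lt_succ_of_lt h, show ¬ (n = a) by omega]
    · by_cases h2 : a = n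
      · subst h2
        simp [h]
      · have : ¬ a < n + 1 := by omega
        simp [h, this, show ¬ (n = a) by omega]

lemma L_length (k : ℕ → ℕ) (n : ℕ) : (L k n).length = ∑ j ∈ Finset.range n, k j := by
  induction n with
  | zero => simp [L]
  | succ n ih =>
    rw [L, List.range_succ, List.flatMap_append, List.length_append]
    simp only [List.flatMap_cons, List.flatMap_nil, List.append_nil, List.length_replicate]
    rw [show (List.range n).flatMap (fun j => List.replicate (k j) j) = L k n from rfl, ih,
      Finset.sum_range_succ]

lemma exists_mono (m r : ℕ) (k : Fin (m + 1) → ℕ) (hk : ∑ j, k j = r) :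
    ∃ t : Fin r → ℕ, Monotone t ∧ (∀ i, t i ≤ m) ∧
      ∀ j : Fin (m + 1), (univ.filter fun i => t i = (j : ℕ)).card = k j := by
  classical
  set k' : ℕ → ℕ := fun j => if h : j < m + 1 then k ⟨j, h⟩ else 0 with hk'
  have hlen : (L k' (m + 1)).length = r := by
    rw [L_length]
    rw [← hk]
    rw [Finset.sum_range fun j => k' j]
    refine Finset.sum_congr rfl fun j _ => ?_
    simp [hk', j.isLt, Nat.not_lt.2 (Nat.lt_succ_iff.1 j.isLt)]
  subst hlen
  refine ⟨fun i => (L k' (m + 1)).get i, ?_, ?_, ?_⟩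
  · intro i i' hii'
    rcases eq_or_lt_of_le hii' with h | h
    · rw [h]
    · exact (List.pairwise_iff_get.1 (L_sorted k' (m + 1)) i i' h)
  · intro i
    exact Nat.lt_succ_iff.1 (L_mem k' (m + 1) _ (List.get_mem _ i))
  · intro j
    rw [bridge, List.ofFn_get, L_count]
    simp [hk', j.isLt, Nat.not_lt.2 (Nat.lt_succ_iff.1 j.isLt)]



lemma count_sum (r m : ℕ) (f : ℕ → ℂ) :
    ∑ t ∈ (Fintype.piFinset fun _ : Fin r => Finset.range (m + 1)).filter (fun t => Monotone t),
      ∏ i, f (t i)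
    = ∑ k ∈ Finset.Nat.antidiagonalTuple (m + 1) r, ∏ j : Fin (m + 1), f (j : ℕ) ^ k j := by
  refine Finset.sum_bij
    (fun t _ => fun j : Fin (m + 1) => (univ.filter fun i => t i = (j : ℕ)).card)
    ?_ ?_ ?_ ?_
  · intro t ht
    rw [Finset.mem_filter, Fintype.mem_piFinset] at ht
    obtain ⟨hp, hmono⟩ := ht
    have hlt : ∀ i, t i < m + 1 := fun i => Finset.mem_range.1 (hp i)
    rw [Finset.Nat.mem_antidiagonalTuple]
    have := Finset.card_eq_sum_card_fiberwise
      (f := fun i : Fin r => (⟨t i, hlt i⟩ : Fin (m + 1))) (s := univ) (t := univ)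
      (fun i _ => mem_univ _)
    rw [Finset.card_univ, Fintype.card_fin] at this
    have hcong : ∀ j : Fin (m + 1), (univ.filter fun i => t i = (j : ℕ)) =
        univ.filter fun i : Fin r => (⟨t i, hlt i⟩ : Fin (m + 1)) = j := by
      intro j
      refine Finset.filter_congr fun i _ => ?_
      rw [Fin.ext_iff]
    rw [Finset.sum_congr rfl fun j _ => congrArg Finset.card (hcong j)]
    exact this.symm
  · intro t ht t' ht' heq
    rw [Finset.mem_filter, Fintype.mem_piFinset] at ht ht'
    exact mono_ext ht.2 ht'.2
      (fun i => Nat.lt_succ_iff.1 (Finset.mem_range.1 (ht.1 i)))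
      (fun i => Nat.lt_succ_iff.1 (Finset.mem_range.1 (ht'.1 i)))
      (fun j => congrFun heq j)
  · intro k hk
    rw [Finset.Nat.mem_antidiagonalTuple] at hk
    obtain ⟨t, hmono, hb, hcount⟩ := exists_mono m r k hk
    refine ⟨t, ?_, ?_⟩
    · rw [Finset.mem_filter, Fintype.mem_piFinset]
      exact ⟨fun i => Finset.mem_range.2 (Nat.lt_succ_of_le (hb i)), hmono⟩
    · funext j; exact hcount j
  · intro t ht
    rw [Finset.mem_filter, Fintype.mem_piFinset] at ht
    have hlt : ∀ i, t i < m + 1 := fun i => Finset.mem_range.1 (ht.1 i)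
    rw [← Finset.prod_fiberwise_of_maps_to
      (g := fun i : Fin r => (⟨t i, hlt i⟩ : Fin (m + 1))) (t := univ)
      (fun i _ => mem_univ _) (fun i => f (t i))]
    refine Finset.prod_congr rfl fun j _ => ?_
    dsimp only
    have hcong : (univ.filter fun i => t i = (j : ℕ)) =
        univ.filter fun i : Fin r => (⟨t i, hlt i⟩ : Fin (m + 1)) = j := by
      refine Finset.filter_congr fun i _ => ?_
      rw [Fin.ext_iff]
    rw [hcong]
    calc ∏ i ∈ univ.filter fun i : Fin r => (⟨t i, hlt i⟩ : Fin (m + 1)) = j, f (t i)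
        = ∏ _i ∈ univ.filter fun i : Fin r => (⟨t i, hlt i⟩ : Fin (m + 1)) = j, f (j : ℕ) := by
          refine Finset.prod_congr rfl fun i hi => ?_
          rw [Finset.mem_filter] at hi
          rw [show t i = (j : ℕ) from by rw [← hi.2]]
      _ = _ := Finset.prod_const _
end Stmt8Aux

open Stmt8Aux in
theorem stmt8 (r m : ℕ) (w : ℂ) (hw : ∀ j : ℕ, j ≤ m → w + j ≠ 0) :
    ((-1 : ℂ) ^ r / (Nat.factorial r : ℂ)) *
      iteratedDeriv r (fun z : ℂ => 1 / (ascPochhammer ℂ (m + 1)).eval z) w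
    = (1 / (ascPochhammer ℂ (m + 1)).eval w) *
        ∑' t : Fin r → ℕ, if Monotone t ∧ ∀ i, t i ≤ m then
          ∏ i, (1 : ℂ) / ((t i : ℂ) + w) else 0 := by
  have hwU : w ∈ U m := fun j => by
    rw [add_comm]; exact hw j (Nat.lt_succ_iff.1 j.isLt)
  have hfun : (fun z : ℂ => 1 / (ascPochhammer ℂ (m + 1)).eval z)
      = fun z => ∏ j : Fin (m + 1), (((j : ℕ) : ℂ) + z)⁻¹ := by
    funext z; rw [one_div, P_eq, ← Finset.prod_inv_distrib]
  rw [hfun, iter m r w hwU]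
  -- LHS simplifies to D m r w
  have hfact : (r.factorial : ℂ) ≠ 0 := Nat.cast_ne_zero.2 r.factorial_ne_zero
  have hL : ((-1 : ℂ) ^ r / (r.factorial : ℂ)) * ((-1 : ℂ) ^ r * (r.factorial : ℂ) * D m r w)
      = D m r w := by
    have h1 : (-1 : ℂ) ^ r * (-1 : ℂ) ^ r = 1 := by rw [← mul_pow]; norm_num
    field_simp
    rw [sq, h1, one_mul]
  rw [hL]
  -- RHS
  classical
  set s := (Fintype.piFinset fun _ : Fin r => Finset.range (m + 1)).filter (fun t => Monotone t)
    with hs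
  have htsum : (∑' t : Fin r → ℕ, if Monotone t ∧ ∀ i, t i ≤ m then
      ∏ i, (1 : ℂ) / ((t i : ℂ) + w) else 0)
      = ∑ t ∈ s, ∏ i, (((t i : ℕ) : ℂ) + w)⁻¹ := by
    rw [tsum_eq_sum (s := s) ?_]
    · refine Finset.sum_congr rfl fun t ht => ?_
      rw [hs, Finset.mem_filter, Fintype.mem_piFinset] at ht
      rw [if_pos ⟨ht.2, fun i => Nat.lt_succ_iff.1 (Finset.mem_range.1 (ht.1 i))⟩]
      exact Finset.prod_congr rfl fun i _ => one_div _
    · intro t ht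
      rw [if_neg]
      rintro ⟨h1, h2⟩
      exact ht (Finset.mem_filter.2
        ⟨Fintype.mem_piFinset.2 fun i => Finset.mem_range.2 (Nat.lt_succ_of_le (h2 i)), h1⟩)
  have hcs := count_sum r m fun a => (((a : ℕ) : ℂ) + w)⁻¹
  beta_reduce at hcs
  rw [htsum, hs, hcs]
  rw [one_div, P_eq, ← Finset.prod_inv_distrib, Finset.mul_sum]
  refine Finset.sum_congr rfl fun k _ => ?_
  rw [← Finset.prod_mul_distrib]
  exact Finset.prod_congr rfl fun j _ => pow_succ' _ _
end

section
/- For all integers s ≥ 1 and t ≥ 2, Σ_{i=0}^{s-1} ζ(2i+t) ζ*({2}^{s-1-i}) = Σ_{i=1}^{s} ζ*({2}^{i-1}, t, {2}^{s-i}), where ζ(0) is interpreted as -1/2 and ζ*(∅) = 1. -/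
open scoped BigOperators

/-- Multiple zeta-star value ζ*, encoded with mᵢ = m i + 1. -/
noncomputable def zetaStar {n : ℕ} (k : Fin n → ℕ) : ℝ :=
  ∑' m : Fin n → ℕ, if Monotone m then ∏ i, (1 : ℝ) / ((m i + 1 : ℝ) ^ (k i)) else 0

open scoped ENNReal NNReal

namespace ZS12


noncomputable def w (k m : ℕ) : ℝ≥0∞ := (((m : ℝ≥0∞) + 1)⁻¹) ^ k

noncomputable def P : ℕ → ℕ → ℝ≥0∞
  | 0, _ => 1
  | c + 1, n => ∑' m : ℕ, if n ≤ m then w 2 m * P c m else 0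

noncomputable def B : ℕ → ℕ → ℕ → ℝ≥0∞
  | 0, _, _ => 1
  | a + 1, n, mm => ∑' v : ℕ, if n ≤ v ∧ v < mm then w 2 v * B a v mm else 0

noncomputable def T {n : ℕ} (k : Fin n → ℕ) (lb : ℕ) : ℝ≥0∞ :=
  ∑' m : Fin n → ℕ, if (Monotone m ∧ ∀ i, lb ≤ m i) then ∏ i, w (k i) (m i) else 0

noncomputable def Ze (k : ℕ) : ℝ≥0∞ := ∑' m : ℕ, w k m

lemma w_ne_top (k m : ℕ) : w k m ≠ ⊤ := by
  apply ENNReal.pow_ne_top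
  simp

lemma w_eq_ofReal (k m : ℕ) : w k m = ENNReal.ofReal (1 / ((m : ℝ) + 1) ^ k) := by
  rw [w, one_div, ← inv_pow, ENNReal.ofReal_pow (by positivity)]
  congr 1
  rw [ENNReal.ofReal_inv_of_pos (by positivity)]
  congr 1
  rw [ENNReal.ofReal_add (by positivity) (by norm_num), ENNReal.ofReal_natCast, ENNReal.ofReal_one]

lemma w_toReal (k m : ℕ) : (w k m).toReal = 1 / ((m : ℝ) + 1) ^ k := by
  rw [w_eq_ofReal, ENNReal.toReal_ofReal (by positivity)]

lemma summable_aux {k : ℕ} (hk : 2 ≤ k) : Summable (fun m : ℕ => 1 / ((m : ℝ) + 1) ^ k) := by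
  have h : Summable (fun n : ℕ => 1 / (n : ℝ) ^ k) :=
    Real.summable_one_div_nat_pow.2 (by omega)
  have := (summable_nat_add_iff 1).2 h
  simpa using this

lemma Ze_eq_ofReal {k : ℕ} (hk : 2 ≤ k) :
    Ze k = ENNReal.ofReal (∑' m : ℕ, 1 / ((m : ℝ) + 1) ^ k) := by
  rw [Ze, ENNReal.ofReal_tsum_of_nonneg (fun n => by positivity) (summable_aux hk)]
  exact tsum_congr fun m => (w_eq_ofReal k m)

lemma Ze_ne_top {k : ℕ} (hk : 2 ≤ k) : Ze k ≠ ⊤ := by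
  rw [Ze_eq_ofReal hk]; exact ENNReal.ofReal_ne_top

lemma Ze_toReal {k : ℕ} (hk : 2 ≤ k) : (Ze k).toReal = ∑' m : ℕ, 1 / ((m : ℝ) + 1) ^ k := by
  rw [Ze_eq_ofReal hk, ENNReal.toReal_ofReal (tsum_nonneg fun n => by positivity)]


lemma P_le (c : ℕ) : ∀ n, P c n ≤ Ze 2 ^ c := by
  induction c with
  | zero => intro n; simp [P]
  | succ c ih =>
    intro n
    rw [P, pow_succ, mul_comm]
    calc (∑' m : ℕ, if n ≤ m then w 2 m * P c m else 0)
        ≤ ∑' m : ℕ, w 2 m * Ze 2 ^ c := by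
          apply ENNReal.tsum_le_tsum
          intro m
          split
          · exact mul_le_mul_right (ih m) _
          · exact zero_le
      _ = Ze 2 * Ze 2 ^ c := by rw [ENNReal.tsum_mul_right]; rfl

lemma B_eq_zero {a n mm : ℕ} (h : mm ≤ n) : B (a + 1) n mm = 0 := by
  rw [B]
  convert tsum_zero with v
  split
  · omega
  · rfl

lemma B_top_split (m : ℕ) : ∀ a n, n ≤ m →
    B (a + 1) n (m + 1) = B (a + 1) n m + w 2 m * B a n (m + 1) := by
  intro a
  induction a with
  | zero =>
    intro n hn
    rw [B, B]
    have step : ∀ v : ℕ, (if n ≤ v ∧ v < m + 1 then w 2 v * B 0 v (m+1) else 0)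
        = (if n ≤ v ∧ v < m then w 2 v * B 0 v m else 0)
          + (if v = m then w 2 m * B 0 m (m+1) else 0) := by
      intro v
      by_cases h2 : v = m
      · subst h2
        rw [if_pos ⟨hn, by omega⟩, if_neg (by omega), if_pos rfl, zero_add]
      · by_cases h1 : n ≤ v ∧ v < m + 1
        · rw [if_pos h1, if_pos ⟨h1.1, by omega⟩, if_neg h2, add_zero]
          simp [B]
        · rw [if_neg h1, if_neg (by omega), if_neg h2, add_zero]
    rw [tsum_congr step, ENNReal.tsum_add, tsum_ite_eq]
    simp [B]
  | succ a ih =>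
    intro n hn
    rw [show B (a+1+1) n (m+1)
        = ∑' v : ℕ, if n ≤ v ∧ v < m + 1 then w 2 v * B (a+1) v (m+1) else 0 from by rw [B]]
    have step : ∀ v : ℕ, (if n ≤ v ∧ v < m + 1 then w 2 v * B (a+1) v (m+1) else 0)
        = ((if n ≤ v ∧ v < m then w 2 v * B (a+1) v m else 0)
            + (if v = m then w 2 m * B (a+1) m m else 0))
          + w 2 m * (if n ≤ v ∧ v < m + 1 then w 2 v * B a v (m+1) else 0) := by
      intro v
      by_cases h1 : n ≤ v ∧ v < m + 1
      · rw [if_pos h1, if_pos h1, ih v (by omega), mul_add]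
        by_cases h2 : v = m
        · subst h2
          rw [if_neg (by omega), if_pos rfl]
          ring
        · rw [if_pos (show n ≤ v ∧ v < m by omega), if_neg h2]
          ring
      · rw [if_neg h1, if_neg h1, if_neg (show ¬(n ≤ v ∧ v < m) by omega),
          if_neg (show ¬ v = m by omega)]
        simp
    rw [tsum_congr step, ENNReal.tsum_add, ENNReal.tsum_add, tsum_ite_eq,
      ENNReal.tsum_mul_left, B_eq_zero (le_refl m), mul_zero, add_zero]
    conv_rhs => rw [B, B]

lemma B_sum (m : ℕ) : ∀ a n, n ≤ m →
    B a n (m + 1) = ∑ j ∈ Finset.range (a + 1), (w 2 m) ^ j * B (a - j) n m := by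
  intro a
  induction a with
  | zero => intro n hn; simp [B]
  | succ a ih =>
    intro n hn
    rw [B_top_split m a n hn, ih n hn, Finset.mul_sum, Finset.sum_range_succ' _ (a+1)]
    simp only [pow_zero, one_mul, Nat.sub_zero]
    rw [add_comm]
    congr 1
    apply Finset.sum_congr rfl
    intro j hj
    rw [← mul_assoc, ← pow_succ']
    congr 2
    omega

lemma P_split (m : ℕ) : ∀ c n, n ≤ m →
    P c n = ∑ a ∈ Finset.range (c + 1), B a n m * P (c - a) m := by
  intro c
  induction c with
  | zero => intro n hn; simp [B, P]
  | succ c ih =>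
    intro n hn
    rw [P]
    have step : ∀ v : ℕ, (if n ≤ v then w 2 v * P c v else 0)
        = (∑ a ∈ Finset.range (c+1),
            (if n ≤ v ∧ v < m then w 2 v * B a v m else 0) * P (c-a) m)
          + (if m ≤ v then w 2 v * P c v else 0) := by
      intro v
      by_cases h1 : n ≤ v
      · by_cases h2 : v < m
        · rw [if_pos h1, if_neg (by omega), add_zero, ih v (by omega), Finset.mul_sum]
          apply Finset.sum_congr rfl
          intro a _
          rw [if_pos ⟨h1, h2⟩, mul_assoc]
        · rw [if_pos h1, if_pos (by omega : m ≤ v)]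
          simp [show ¬(n ≤ v ∧ v < m) from by omega]
      · rw [if_neg h1, if_neg (show ¬ m ≤ v by omega)]
        simp [show ¬(n ≤ v ∧ v < m) from by omega]
    have h2 : (∑' v : ℕ, if m ≤ v then w 2 v * P c v else 0) = P (c + 1) m := by rw [P]
    rw [tsum_congr step, ENNReal.tsum_add, h2, Summable.tsum_finsetSum (fun _ _ => ENNReal.summable)]
    have h3 : ∀ a ∈ Finset.range (c+1),
        (∑' v : ℕ, (if n ≤ v ∧ v < m then w 2 v * B a v m else 0) * P (c-a) m)
          = B (a+1) n m * P (c-a) m := by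
      intro a _
      rw [ENNReal.tsum_mul_right]
      conv_rhs => rw [B]
    rw [Finset.sum_congr rfl h3, Finset.sum_range_succ' _ (c+1)]
    simp [B]

lemma T_zero (k : Fin 0 → ℕ) (lb : ℕ) : T k lb = 1 := by
  rw [T]
  haveI : Unique (Fin 0 → ℕ) := by infer_instance
  rw [tsum_eq_single default (fun b hb => absurd (Subsingleton.elim b default) hb)]
  have h1 : Monotone (default : Fin 0 → ℕ) := fun a => a.elim0
  have h2 : ∀ i : Fin 0, lb ≤ (default : Fin 0 → ℕ) i := fun i => i.elim0
  rw [if_pos ⟨h1, h2⟩]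
  simp

lemma cons_cond {n : ℕ} (lb m0 : ℕ) (p : Fin n → ℕ) :
    (Monotone (Fin.cons m0 p : Fin (n+1) → ℕ) ∧ ∀ i, lb ≤ (Fin.cons m0 p : Fin (n+1) → ℕ) i)
      ↔ (lb ≤ m0 ∧ (Monotone p ∧ ∀ i, m0 ≤ p i)) := by
  constructor
  · rintro ⟨hm, hb⟩
    refine ⟨by simpa using hb 0, ?_, fun i => by simpa using hm (Fin.zero_le i.succ)⟩
    intro i j hij
    simpa using hm (show (i.succ : Fin (n+1)) ≤ j.succ by
      rw [Fin.succ_le_succ_iff]; exact hij)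
  · rintro ⟨h0, hp, hge⟩
    constructor
    · intro i j hij
      rcases Fin.eq_zero_or_eq_succ i with rfl | ⟨i', rfl⟩
      · rcases Fin.eq_zero_or_eq_succ j with rfl | ⟨j', rfl⟩
        · exact le_rfl
        · simpa using hge j'
      · rcases Fin.eq_zero_or_eq_succ j with rfl | ⟨j', rfl⟩
        · exact absurd (Fin.le_zero_iff.1 hij) (Fin.succ_ne_zero i')
        · simpa using hp (Fin.succ_le_succ_iff.1 hij)
    · intro i
      rcases Fin.eq_zero_or_eq_succ i with rfl | ⟨i', rfl⟩
      · simpa using h0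
      · simpa using le_trans h0 (hge i')

lemma T_succ {n : ℕ} (k : Fin (n+1) → ℕ) (lb : ℕ) :
    T k lb = ∑' m0 : ℕ,
      if lb ≤ m0 then w (k 0) m0 * T (fun i : Fin n => k i.succ) m0 else 0 := by
  rw [T, ← (Fin.consEquiv (fun _ : Fin (n+1) => ℕ)).tsum_eq, ENNReal.tsum_prod']
  apply tsum_congr
  intro m0
  have hfun : ∀ (a : ℕ) (b : Fin n → ℕ),
      (Fin.consEquiv fun _ : Fin (n+1) => ℕ) (a, b) = (Fin.cons a b : Fin (n+1) → ℕ) :=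
    fun a b => rfl
  simp only [hfun]
  have key : ∀ p : Fin n → ℕ,
      (if (Monotone (Fin.cons m0 p : Fin (n+1) → ℕ) ∧ ∀ i, lb ≤ (Fin.cons m0 p : Fin (n+1) → ℕ) i)
        then ∏ i, w (k i) ((Fin.cons m0 p : Fin (n+1) → ℕ) i) else 0)
      = (if lb ≤ m0 then w (k 0) m0 *
          (if (Monotone p ∧ ∀ i, m0 ≤ p i) then ∏ i, w (k i.succ) (p i) else 0) else 0) := by
    intro p
    by_cases h0 : lb ≤ m0
    · rw [if_pos h0]
      by_cases hc : Monotone p ∧ ∀ i, m0 ≤ p i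
      · rw [if_pos ((cons_cond lb m0 p).2 ⟨h0, hc⟩), if_pos hc, Fin.prod_univ_succ]
        simp
      · rw [if_neg (fun hh => hc ((cons_cond lb m0 p).1 hh).2), if_neg hc, mul_zero]
    · rw [if_neg h0, if_neg (fun hh => h0 ((cons_cond lb m0 p).1 hh).1)]
  rw [tsum_congr key]
  by_cases h0 : lb ≤ m0
  · simp only [if_pos h0]
    rw [ENNReal.tsum_mul_left, T]
  · simp only [if_neg h0]
    exact tsum_zero


lemma P_ne_top (c n : ℕ) : P c n ≠ ⊤ :=
  ne_top_of_le_ne_top (ENNReal.pow_ne_top (Ze_ne_top le_rfl)) (P_le c n)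

lemma T_const : ∀ c lb, T (fun _ : Fin c => 2) lb = P c lb := by
  intro c
  induction c with
  | zero => intro lb; rw [T_zero, P]
  | succ c ih =>
    intro lb
    rw [T_succ, P]
    apply tsum_congr
    intro m
    by_cases h : lb ≤ m
    · rw [if_pos h, if_pos h]
      congr 1
      exact ih m
    · rw [if_neg h, if_neg h]

lemma T_mid (t : ℕ) : ∀ i s, i < s → ∀ lb,
    T (fun j : Fin s => if (j : ℕ) = i then t else 2) lb
      = ∑' m : ℕ, if lb ≤ m then B i lb (m+1) * (w t m * P (s-1-i) m) else 0 := by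
  intro i
  induction i with
  | zero =>
    intro s hs lb
    obtain ⟨c, rfl⟩ : ∃ c, s = c + 1 := ⟨s - 1, by omega⟩
    rw [T_succ]
    have h0 : (if ((0 : Fin (c+1)) : ℕ) = 0 then t else 2) = t := by simp
    have h1 : (fun i : Fin c => if ((i.succ : Fin (c+1)) : ℕ) = 0 then t else 2)
        = (fun _ : Fin c => 2) := by
      funext j; simp
    simp only [h0, h1]
    apply tsum_congr
    intro m
    by_cases h : lb ≤ m
    · rw [if_pos h, if_pos h, T_const]
      simp [B]
    · rw [if_neg h, if_neg h]
  | succ i ih =>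
    intro s hs lb
    obtain ⟨c, rfl⟩ : ∃ c, s = c + 1 := ⟨s - 1, by omega⟩
    rw [T_succ]
    have h0 : (if ((0 : Fin (c+1)) : ℕ) = i + 1 then t else 2) = 2 := by simp
    have h1 : (fun j : Fin c => if ((j.succ : Fin (c+1)) : ℕ) = i + 1 then t else 2)
        = (fun j : Fin c => if (j : ℕ) = i then t else 2) := by
      funext j; simp
    simp only [h0, h1]
    have hidx : c - 1 - i = c + 1 - 1 - (i + 1) := by omega
    have hT : ∀ v : ℕ, T (fun j : Fin c => if (j : ℕ) = i then t else 2) v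
        = ∑' m : ℕ, if v ≤ m then B i v (m+1) * (w t m * P (c-1-i) m) else 0 :=
      fun v => ih c (by omega) v
    calc (∑' v : ℕ, if lb ≤ v
            then w 2 v * T (fun j : Fin c => if (j : ℕ) = i then t else 2) v else 0)
        = ∑' v : ℕ, ∑' m : ℕ,
            (if lb ≤ v ∧ v ≤ m then w 2 v * (B i v (m+1) * (w t m * P (c-1-i) m)) else 0) := by
          apply tsum_congr
          intro v
          by_cases hv : lb ≤ v
          · rw [if_pos hv, hT v, ← ENNReal.tsum_mul_left]
            apply tsum_congr
            intro m
            by_cases hm : v ≤ m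
            · rw [if_pos hm, if_pos ⟨hv, hm⟩]
            · rw [if_neg hm, if_neg (fun hc => hm hc.2), mul_zero]
          · rw [if_neg hv]
            symm
            have hz : ∀ m : ℕ,
                (if lb ≤ v ∧ v ≤ m then w 2 v * (B i v (m+1) * (w t m * P (c-1-i) m)) else 0)
                  = 0 := fun m => if_neg (fun hc => hv hc.1)
            rw [tsum_congr hz, tsum_zero]
      _ = ∑' m : ℕ, ∑' v : ℕ,
            (if lb ≤ v ∧ v ≤ m then w 2 v * (B i v (m+1) * (w t m * P (c-1-i) m)) else 0) :=
          ENNReal.tsum_comm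
      _ = ∑' m : ℕ, if lb ≤ m
            then B (i+1) lb (m+1) * (w t m * P (c+1-1-(i+1)) m) else 0 := by
          apply tsum_congr
          intro m
          have hinner : (∑' v : ℕ,
              (if lb ≤ v ∧ v ≤ m then w 2 v * (B i v (m+1) * (w t m * P (c-1-i) m)) else 0))
                = B (i+1) lb (m+1) * (w t m * P (c-1-i) m) := by
            have hstep : ∀ v : ℕ,
                (if lb ≤ v ∧ v ≤ m then w 2 v * (B i v (m+1) * (w t m * P (c-1-i) m)) else 0)
                  = (if lb ≤ v ∧ v < m + 1 then w 2 v * B i v (m+1) else 0)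
                      * (w t m * P (c-1-i) m) := by
              intro v
              by_cases hv : lb ≤ v ∧ v ≤ m
              · rw [if_pos hv, if_pos ⟨hv.1, by omega⟩, mul_assoc]
              · rw [if_neg hv, if_neg (by omega), zero_mul]
            rw [tsum_congr hstep, ENNReal.tsum_mul_right]
            congr 1
          rw [hinner, ← hidx]
          by_cases h : lb ≤ m
          · rw [if_pos h]
          · rw [if_neg h, B_eq_zero (by omega : m + 1 ≤ lb), zero_mul]

lemma tri {M : Type*} [AddCommMonoid M] (f : ℕ → ℕ → M) : ∀ n : ℕ,
    ∑ i ∈ Finset.range n, ∑ j ∈ Finset.range (i+1), f j (i - j)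
      = ∑ j ∈ Finset.range n, ∑ a ∈ Finset.range (n - j), f j a := by
  intro n
  induction n with
  | zero => simp
  | succ n ih =>
    rw [Finset.sum_range_succ, ih]
    conv_rhs => rw [Finset.sum_range_succ]
    have hsplit : ∀ j ∈ Finset.range n,
        ∑ a ∈ Finset.range (n + 1 - j), f j a
          = ∑ a ∈ Finset.range (n - j), f j a + f j (n - j) := by
      intro j hj
      have hj' : j < n := Finset.mem_range.1 hj
      have : n + 1 - j = (n - j) + 1 := by omega
      rw [this, Finset.sum_range_succ]
    rw [Finset.sum_congr rfl hsplit, Finset.sum_add_distrib]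
    have hlast : ∑ a ∈ Finset.range (n + 1 - n), f n a = f n 0 := by
      simp
    rw [hlast]
    have hdiag : ∑ j ∈ Finset.range (n+1), f j (n - j)
        = ∑ j ∈ Finset.range n, f j (n - j) + f n (n - n) := Finset.sum_range_succ _ _
    rw [hdiag, Nat.sub_self]
    abel

lemma core (s m : ℕ) :
    ∑ i ∈ Finset.range s, B i 0 (m+1) * P (s-1-i) m
      = ∑ i ∈ Finset.range s, (w 2 m)^i * P (s-1-i) 0 := by
  calc ∑ i ∈ Finset.range s, B i 0 (m+1) * P (s-1-i) m
      = ∑ i ∈ Finset.range s, ∑ j ∈ Finset.range (i+1),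
          (w 2 m)^j * B (i-j) 0 m * P (s-1-i) m := by
        apply Finset.sum_congr rfl
        intro i _
        rw [B_sum m i 0 (Nat.zero_le m), Finset.sum_mul]
    _ = ∑ i ∈ Finset.range s, ∑ j ∈ Finset.range (i+1),
          (w 2 m)^j * B (i-j) 0 m * P (s-1-j-(i-j)) m := by
        apply Finset.sum_congr rfl
        intro i _
        apply Finset.sum_congr rfl
        intro j hj
        have hj' : j ≤ i := by
          have := Finset.mem_range.1 hj; omega
        have hss : s - 1 - i = s - 1 - j - (i - j) := by omega
        rw [hss]
    _ = ∑ j ∈ Finset.range s, ∑ a ∈ Finset.range (s - j),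
          (w 2 m)^j * B a 0 m * P (s-1-j-a) m :=
        tri (fun j a => (w 2 m)^j * B a 0 m * P (s-1-j-a) m) s
    _ = ∑ j ∈ Finset.range s, (w 2 m)^j * P (s-1-j) 0 := by
        apply Finset.sum_congr rfl
        intro j hj
        have hj' : j < s := Finset.mem_range.1 hj
        have hr : s - j = (s - 1 - j) + 1 := by omega
        rw [hr, Finset.sum_congr rfl (fun a _ => mul_assoc ((w 2 m)^j) (B a 0 m) _),
          ← Finset.mul_sum, ← P_split m (s-1-j) 0 (Nat.zero_le m)]

lemma main (s t : ℕ) (ht : 2 ≤ t) :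
    ∑ i ∈ Finset.range s, Ze (2*i+t) * P (s-1-i) 0
      = ∑ i ∈ Finset.range s, T (fun j : Fin s => if (j : ℕ) = i then t else 2) 0 := by
  have hL : ∀ i ∈ Finset.range s, Ze (2*i+t) * P (s-1-i) 0
      = ∑' m : ℕ, (w 2 m)^i * (w t m * P (s-1-i) 0) := by
    intro i _
    rw [Ze, ← ENNReal.tsum_mul_right]
    apply tsum_congr
    intro m
    rw [w, w, w, pow_add, pow_mul, mul_assoc]
  have hR : ∀ i ∈ Finset.range s,
      T (fun j : Fin s => if (j : ℕ) = i then t else 2) 0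
        = ∑' m : ℕ, B i 0 (m+1) * (w t m * P (s-1-i) m) := by
    intro i hi
    rw [T_mid t i s (Finset.mem_range.1 hi) 0]
    exact tsum_congr fun m => if_pos (Nat.zero_le m)
  rw [Finset.sum_congr rfl hL, Finset.sum_congr rfl hR,
    ← Summable.tsum_finsetSum (fun _ _ => ENNReal.summable), ← Summable.tsum_finsetSum (fun _ _ => ENNReal.summable)]
  apply tsum_congr
  intro m
  calc ∑ i ∈ Finset.range s, (w 2 m)^i * (w t m * P (s-1-i) 0)
      = (∑ i ∈ Finset.range s, (w 2 m)^i * P (s-1-i) 0) * w t m := by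
        rw [Finset.sum_mul]
        exact Finset.sum_congr rfl fun i _ => by ring
    _ = (∑ i ∈ Finset.range s, B i 0 (m+1) * P (s-1-i) m) * w t m := by rw [core s m]
    _ = ∑ i ∈ Finset.range s, B i 0 (m+1) * (w t m * P (s-1-i) m) := by
        rw [Finset.sum_mul]
        exact Finset.sum_congr rfl fun i _ => by ring

lemma zetaStar_eq {n : ℕ} (k : Fin n → ℕ) : zetaStar k = (T k 0).toReal := by
  rw [T, ENNReal.tsum_toReal_eq]
  · rw [zetaStar]
    apply tsum_congr
    intro m
    by_cases h : Monotone m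
    · rw [if_pos h, if_pos ⟨h, fun i => Nat.zero_le _⟩, ENNReal.toReal_prod]
      apply Finset.prod_congr rfl
      intro i _
      rw [w_toReal]
    · rw [if_neg h, if_neg (fun hc => h hc.1), ENNReal.toReal_zero]
  · intro m
    split
    · exact ENNReal.prod_ne_top (fun i _ => w_ne_top _ _)
    · exact ENNReal.zero_ne_top

lemma zeta_eq (K : ℕ) (hK : 2 ≤ K) : riemannZeta (K : ℂ) = ((Ze K).toReal : ℂ) := by
  rw [zeta_nat_eq_tsum_of_gt_one (by omega : 1 < K), Ze_toReal hK]
  have h1 : ∀ n : ℕ, (1 / (n : ℂ)^K) = ((1 / (n : ℝ)^K : ℝ) : ℂ) := by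
    intro n; push_cast; ring
  rw [tsum_congr h1, ← Complex.ofReal_tsum]
  congr 1
  have hsum : Summable (fun n : ℕ => 1 / (n : ℝ)^K) :=
    Real.summable_one_div_nat_pow.2 (by omega)
  rw [Summable.tsum_eq_zero_add hsum]
  have h0 : (1 : ℝ) / (0 : ℕ)^K = 0 := by
    simp [zero_pow (show K ≠ 0 by omega)]
  rw [h0, zero_add]
  apply tsum_congr
  intro n
  push_cast
  ring

end ZS12

theorem stmt12 (s t : ℕ) (hs : 1 ≤ s) (ht : 2 ≤ t) :
    ∑ i ∈ Finset.range s,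
        riemannZeta (2 * i + t) * ((zetaStar (fun _ : Fin (s - 1 - i) => 2) : ℝ) : ℂ)
    = ∑ i ∈ Finset.range s,
        ((zetaStar (fun j : Fin s => if (j : ℕ) = i then t else 2) : ℝ) : ℂ) := by
  classical
  have key := ZS12.main s t ht
  have hLne : ∀ i ∈ Finset.range s,
      ZS12.Ze (2*i+t) * ZS12.P (s-1-i) 0 ≠ ⊤ := fun i _ =>
    ENNReal.mul_ne_top (ZS12.Ze_ne_top (by omega)) (ZS12.P_ne_top _ _)
  have hRne : ∀ i ∈ Finset.range s,
      ZS12.T (fun j : Fin s => if (j : ℕ) = i then t else 2) 0 ≠ ⊤ := by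
    intro i hi
    have h1 : ∑ i ∈ Finset.range s,
        ZS12.T (fun j : Fin s => if (j : ℕ) = i then t else 2) 0 < ⊤ := by
      rw [← key]
      exact ENNReal.sum_lt_top.2 fun i hi => (hLne i hi).lt_top
    exact (ENNReal.sum_lt_top.1 h1 i hi).ne
  have hLHS : ∀ i ∈ Finset.range s,
      riemannZeta (2 * i + t) * ((zetaStar (fun _ : Fin (s - 1 - i) => 2) : ℝ) : ℂ)
        = (((ZS12.Ze (2*i+t) * ZS12.P (s-1-i) 0).toReal : ℝ) : ℂ) := by
    intro i _
    have hz : (2 * (i : ℂ) + (t : ℂ)) = (((2*i+t : ℕ) : ℕ) : ℂ) := by push_cast; ring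
    rw [hz, ZS12.zeta_eq _ (by omega), ZS12.zetaStar_eq, ZS12.T_const,
      ENNReal.toReal_mul, Complex.ofReal_mul]
  have hRHS : ∀ i ∈ Finset.range s,
      ((zetaStar (fun j : Fin s => if (j : ℕ) = i then t else 2) : ℝ) : ℂ)
        = (((ZS12.T (fun j : Fin s => if (j : ℕ) = i then t else 2) 0).toReal : ℝ) : ℂ) := by
    intro i _
    rw [ZS12.zetaStar_eq]
  rw [Finset.sum_congr rfl hLHS, Finset.sum_congr rfl hRHS,
    ← Complex.ofReal_sum, ← Complex.ofReal_sum,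
    ← ENNReal.toReal_sum hLne, ← ENNReal.toReal_sum hRne, key]
end

section
/- For every integer s ≥ 1, Σ_{i=2}^{s+1} C(2(s+1), 2i) B_{2(s+1-i)} B_{2i} (1 - 2^{1-2i}) = [1 - (2s+1)(1 - 2^{1-2(s+1)})] B_{2(s+1)} - ((s+1)(2s+1)/12) B_{2s}. -/
open scoped BigOperators

open PowerSeries Finset Nat

namespace St14

noncomputable def A : ℚ⟦X⟧ := bernoulliPowerSeries ℚ
noncomputable def E : ℚ⟦X⟧ := PowerSeries.exp ℚ
noncomputable def F : ℚ⟦X⟧ := rescale (2⁻¹ : ℚ) E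
noncomputable def Ah : ℚ⟦X⟧ := rescale (2⁻¹ : ℚ) A

lemma coeffA (k : ℕ) : coeff k A = bernoulli k / k ! := by
  simp [A, bernoulliPowerSeries, coeff_mk]

lemma coeffAh (k : ℕ) : coeff k Ah = 2⁻¹ ^ k * (bernoulli k / k !) := by
  simp [Ah, coeff_rescale, coeffA]

lemma h1 : A * (E - 1) = X := bernoulliPowerSeries_mul_exp_sub_one ℚ

lemma hF : F * F = E := by
  have := PowerSeries.exp_mul_exp_eq_exp_add (2⁻¹ : ℚ) (2⁻¹ : ℚ)
  norm_num at this
  simpa [F, E] using this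

lemma h2 : Ah * (F - 1) = C 2⁻¹ * X := by
  have := congrArg (rescale (2⁻¹ : ℚ)) h1
  simpa [map_mul, map_sub, map_one, rescale_X, Ah, F] using this

lemma hEne : (E - 1 : ℚ⟦X⟧) ≠ 0 := by
  intro h
  have := congrArg (coeff 1) h
  simp [E, coeff_exp, coeff_one] at this

lemma hFne : (F - 1 : ℚ⟦X⟧) ≠ 0 := by
  intro h
  have := congrArg (coeff 1) h
  simp [F, E, coeff_rescale, coeff_exp, coeff_one] at this

lemma hc : (2 : ℚ⟦X⟧) * C 2⁻¹ = 1 := by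
  have : (2 : ℚ⟦X⟧) = C 2 := by simp [map_ofNat]
  rw [this, ← map_mul]
  norm_num

lemma h6 : A * (F + 1) = 2 * Ah := by
  apply mul_right_cancel₀ hFne
  linear_combination A * hF + h1 - 2 * h2 - X * hc

lemma hdE : d⁄dX ℚ E = E := by
  ext n
  rw [PowerSeries.coeff_derivative]
  simp only [E, coeff_exp, Algebra.algebraMap_self, RingHom.id_apply]
  have h : ((n+1)! : ℚ) = (n+1) * n ! := by push_cast [Nat.factorial_succ]; ring
  have h2 : ((n:ℚ)+1) ≠ 0 := by positivity
  have h3 : ((n)! : ℚ) ≠ 0 := by exact_mod_cast Nat.factorial_ne_zero n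
  field_simp [h]
  rw [h]

lemma derivative_rescale (a : ℚ) (f : ℚ⟦X⟧) :
    d⁄dX ℚ (rescale a f) = C a * rescale a (d⁄dX ℚ f) := by
  ext n
  rw [PowerSeries.coeff_derivative, coeff_rescale, PowerSeries.coeff_C_mul, coeff_rescale,
    PowerSeries.coeff_derivative]
  ring

lemma hdF : d⁄dX ℚ F = C 2⁻¹ * F := by
  rw [F, derivative_rescale, hdE]

lemma h4 : d⁄dX ℚ A * (E - 1) + A * E = 1 := by
  have := congrArg (d⁄dX ℚ) h1
  simp only [Derivation.leibniz, map_sub, hdE, Derivation.map_one_eq_zero,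
    PowerSeries.derivative_X, smul_eq_mul] at this
  linear_combination this

lemma h5 : d⁄dX ℚ Ah * (F - 1) + Ah * (C 2⁻¹ * F) = C 2⁻¹ := by
  have := congrArg (d⁄dX ℚ) h2
  simp only [Derivation.leibniz, map_sub, hdF, Derivation.map_one_eq_zero,
    PowerSeries.derivative_X, PowerSeries.derivative_C, smul_eq_mul] at this
  linear_combination this

lemma hD : A - X * d⁄dX ℚ A = A * A * E := by
  apply mul_right_cancel₀ (mul_ne_zero hEne hEne)
  linear_combination ((E-1) - A*E*(E-1)) * h1 - (X*(E-1)) * h4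

lemma master : A * (A - 2 * Ah)
    = (A - X * d⁄dX ℚ A) - 2 * (Ah - X * d⁄dX ℚ Ah) + X * Ah - C 2⁻¹ * (X * A) := by
  apply mul_right_cancel₀ hFne
  linear_combination (A*(F-1) - C 2⁻¹ * X) * h6 - (F-1) * hD
    + (2 + 2*(C 2⁻¹)*X - X) * h2 - 2*X*h5
    + ((C 2⁻¹)*X^2 + X*A*F) * hc + (A*A*(F-1) - A*A*F) * hF - A*F*h1

lemma bern_odd {k : ℕ} (hk : Odd k) (h1 : 1 < k) : bernoulli k = 0 := by
  rw [bernoulli_eq_bernoulli'_of_ne_one (by omega), bernoulli'_eq_zero_of_odd hk h1]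

noncomputable def w (k : ℕ) : ℚ := (1 - 2 * 2⁻¹ ^ k) * (bernoulli k / k !)

lemma coeffB (k : ℕ) : coeff k (A - 2 * Ah) = w k := by
  have h2 : (2 : ℚ⟦X⟧) = C 2 := by simp [map_ofNat]
  rw [map_sub, h2, coeff_C_mul, coeffA, coeffAh, w]
  ring

lemma coeffRHS (s : ℕ) (hs : 1 ≤ s) :
    coeff (2*s+2) ((A - X * d⁄dX ℚ A) - 2 * (Ah - X * d⁄dX ℚ Ah) + X * Ah - C 2⁻¹ * (X * A))
      = (1 - (2*(s:ℚ)+2)) * ((1 - 2 * 2⁻¹ ^ (2*s+2)) * (bernoulli (2*s+2) / (2*s+2)!)) := by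
  have h2 : (2 : ℚ⟦X⟧) = C 2 := by simp [map_ofNat]
  have e : 2*s+2 = (2*s+1)+1 := rfl
  have hodd : bernoulli (2*s+1) = 0 := bern_odd ⟨s, by ring⟩ (by omega)
  rw [map_sub, map_add, map_sub, map_sub, h2, coeff_C_mul, map_sub, coeff_C_mul, e]
  simp only [coeff_succ_X_mul, PowerSeries.coeff_derivative, coeffA, coeffAh]
  rw [hodd]
  push_cast
  ring

lemma sum_even (N : ℕ) (g : ℕ → ℚ) (h : ∀ k, Odd k → g k = 0) :
    ∑ k ∈ range (2*N+1), g k = ∑ i ∈ range (N+1), g (2*i) := by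
  induction N with
  | zero => simp
  | succ n ih =>
      have e : 2*(n+1)+1 = ((2*n+1)+1)+1 := by ring
      rw [e, sum_range_succ, sum_range_succ, ih, h (2*n+1) ⟨n, by ring⟩,
        sum_range_succ]
      have hg : g (2*n+2) = g (2*(n+1)) := congrArg g (by ring)
      rw [hg, sum_range_succ, sum_range_succ]
      ring

lemma zp (k : ℕ) : (2:ℚ) ^ ((1:ℤ) - 2*(k:ℤ)) = 2 * 2⁻¹ ^ (2*k) := by
  have e : (1:ℤ) - 2*(k:ℤ) = 1 - ((2*k : ℕ) : ℤ) := by push_cast; ring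
  rw [e, zpow_sub₀ (two_ne_zero), zpow_one, zpow_natCast, inv_pow, div_eq_mul_inv]

end St14

open St14 in
theorem stmt14 (s : ℕ) (hs : 1 ≤ s) :
    ∑ i ∈ Finset.Icc 2 (s + 1),
        (Nat.choose (2 * (s + 1)) (2 * i) : ℚ) * bernoulli (2 * (s + 1 - i))
          * bernoulli (2 * i) * (1 - (2 : ℚ) ^ ((1 : ℤ) - 2 * i))
    = (1 - (2 * s + 1) * (1 - (2 : ℚ) ^ ((1 : ℤ) - 2 * (s + 1)))) * bernoulli (2 * (s + 1))
      - ((s + 1) * (2 * s + 1) / 12) * bernoulli (2 * s) := by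
  classical
  have hM : (A - 2 * Ah) * A
      = (A - X * d⁄dX ℚ A) - 2 * (Ah - X * d⁄dX ℚ Ah) + X * Ah - C 2⁻¹ * (X * A) := by
    rw [mul_comm]; exact master
  have hco := congrArg (coeff (2*s+2)) hM
  rw [coeff_mul, Finset.Nat.sum_antidiagonal_eq_sum_range_succ_mk, coeffRHS s hs] at hco
  simp only [coeffB, coeffA] at hco
  set g : ℕ → ℚ := fun k => w k * (bernoulli (2*s+2-k) / ((2*s+2-k)! : ℚ)) with hgdef
  have hg0 : ∀ k, Odd k → g k = 0 := by
    intro k hk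
    obtain ⟨j, rfl⟩ := hk
    match j with
    | 0 => simp only [hgdef]; norm_num [w]
    | (j+1) =>
        have : bernoulli (2*(j+1)+1) = 0 := bern_odd ⟨j+1, by ring⟩ (by omega)
        simp only [hgdef, w, this]
        norm_num
  have e3 : (2*s+2).succ = 2*(s+1)+1 := by omega
  rw [e3] at hco
  rw [sum_even (s+1) g hg0] at hco
  rw [Finset.sum_range_succ', Finset.sum_range_succ'] at hco
  -- compute the two peeled terms
  have hg2 : g (2*(0+1)) = (1/24) * (bernoulli (2*s) / ((2*s)! : ℚ)) := by
    have e : 2*s+2-(2*(0+1)) = 2*s := by omega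
    have hb2 : bernoulli 2 = 1/6 := by
      rw [bernoulli_eq_bernoulli'_of_ne_one (by norm_num), bernoulli'_two]
    simp only [hgdef, e, w]
    norm_num [hb2]
  have hg00 : g (2*0) = -(bernoulli (2*s+2) / ((2*s+2)! : ℚ)) := by
    simp only [hgdef, w]
    norm_num
  -- goal rewriting
  rw [← Finset.Ico_add_one_right_eq_Icc, Finset.sum_Ico_eq_sum_range]
  have e4 : s+1+1-2 = s := by omega
  rw [e4]
  have hterm : ∀ i ∈ range s,
      (Nat.choose (2 * (s + 1)) (2 * (2+i)) : ℚ) * bernoulli (2 * (s + 1 - (2+i)))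
          * bernoulli (2 * (2+i)) * (1 - (2 : ℚ) ^ ((1 : ℤ) - 2 * ((2+i : ℕ) : ℤ)))
        = ((2*s+2)! : ℚ) * g (2*(i+1+1)) := by
    intro i hi
    have hi' : i < s := mem_range.mp hi
    have ga : g (2*(i+1+1)) = w (2*(2+i)) * (bernoulli (2*(s+1-(2+i))) / ((2*(s+1-(2+i)))! : ℚ)) := by
      have e5 : 2*(i+1+1) = 2*(2+i) := by ring
      have e6 : 2*s+2-(2*(2+i)) = 2*(s+1-(2+i)) := by omega
      rw [hgdef]
      simp only [e5, e6]
    rw [ga, Nat.cast_choose ℚ (by omega : 2*(2+i) ≤ 2*(s+1)), zp (2+i), w]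
    have e7 : 2*(s+1) - 2*(2+i) = 2*(s+1-(2+i)) := by omega
    have e8 : (((2*(s+1))! : ℕ) : ℚ) = ((2*s+2)! : ℚ) := by norm_num [show 2*(s+1) = 2*s+2 from by ring]
    rw [e7, e8]
    have hf1 : (((2*(2+i))! : ℕ) : ℚ) ≠ 0 := by exact_mod_cast Nat.factorial_ne_zero _
    have hf2 : (((2*(s+1-(2+i)))! : ℕ) : ℚ) ≠ 0 := by exact_mod_cast Nat.factorial_ne_zero _
    field_simp
  rw [Finset.sum_congr rfl hterm, ← Finset.mul_sum]
  have hS : ∑ i ∈ range s, g (2*(i+1+1))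
      = (1 - (2*(s:ℚ)+2)) * ((1 - 2 * 2⁻¹ ^ (2*s+2)) * (bernoulli (2*s+2) / ((2*s+2)! : ℚ)))
        - g (2*(0+1)) - g (2*0) := by linarith [hco]
  have ezp : (2:ℚ) ^ ((1:ℤ) - 2 * ((s:ℤ) + 1)) = 2 * 2⁻¹ ^ (2*s+2) := by
    have h := zp (s+1)
    rw [show 2*(s+1) = 2*s+2 from by ring] at h
    rw [← h]
    norm_num
  rw [hS, hg2, hg00, ezp]
  have efac : ((2*s+2)! : ℚ) = ((2*s+2) * (2*s+1)) * ((2*s)! : ℚ) := by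
    rw [show 2*s+2 = (2*s+1)+1 from rfl, Nat.factorial_succ, Nat.factorial_succ]
    push_cast
    ring
  have eb : bernoulli (2*(s+1)) = bernoulli (2*s+2) := by norm_num [show 2*(s+1) = 2*s+2 from by ring]
  have ep : (2:ℚ)⁻¹ ^ (2*(s+1)) = 2⁻¹ ^ (2*s+2) := by norm_num [show 2*(s+1) = 2*s+2 from by ring]
  rw [eb]
  have hf3 : ((2*s)! : ℚ) ≠ 0 := by exact_mod_cast Nat.factorial_ne_zero _
  have hf4 : ((2*s+2)! : ℚ) ≠ 0 := by exact_mod_cast Nat.factorial_ne_zero _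
  rw [efac]
  field_simp
  ring
end

section
/- For every integer s ≥ 1, the coefficient c(s) := (2s(s+1))/3 + (2/3) Σ_{i=2}^{s+1} C(2(s+1), 2i) (B_{2(s+1-i)} B_{2i}/B_{2(s+1)}) (1 - 2^{1-2i})/(1 - 2^{1-2(s+1)}) has the closed form c(s) = (2/3)[s(s-1) - 1 + (1 - 2^{1-2(s+1)})^{-1}] - (1/18) ((s+1)(2s+1)/(1 - 2^{1-2(s+1)})) (B_{2s}/B_{2(s+1)}). -/
open scoped BigOperators

open PowerSeries

noncomputable def myG : ℚ⟦X⟧ :=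
  bernoulliPowerSeries ℚ - C (2 : ℚ) * rescale (2⁻¹ : ℚ) (bernoulliPowerSeries ℚ)

def gg (k : ℕ) : ℚ := (1 - (2 : ℚ) ^ ((1 : ℤ) - (k : ℤ))) * bernoulli k

lemma two_zpow (k : ℕ) : (2 : ℚ) ^ ((1 : ℤ) - (k : ℤ)) = 2 * ((2 : ℚ) ^ k)⁻¹ := by
  rw [zpow_sub₀ (by norm_num : (2:ℚ) ≠ 0), zpow_one, zpow_natCast]
  ring

lemma coeff_bps (n : ℕ) : (coeff n) (bernoulliPowerSeries ℚ) = bernoulli n / (n.factorial : ℚ) := by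
  simp [bernoulliPowerSeries, coeff_mk]

lemma coeff_myG (n : ℕ) : (coeff n) myG = gg n / (n.factorial : ℚ) := by
  simp only [myG, map_sub, coeff_C_mul, coeff_rescale, coeff_bps, gg, two_zpow, inv_pow]
  ring

lemma derivative_exp' : d⁄dX ℚ (exp ℚ) = exp ℚ := by
  ext n
  rw [coeff_derivative, coeff_exp, coeff_exp]
  simp only [Algebra.algebraMap_self, RingHom.id_apply]
  field_simp [Nat.factorial_succ]
  push_cast [Nat.factorial_succ]
  ring

lemma derivative_rescale (a : ℚ) (f : ℚ⟦X⟧) :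
    d⁄dX ℚ (rescale a f) = C a * rescale a (d⁄dX ℚ f) := by
  ext n
  rw [coeff_derivative, coeff_rescale, coeff_C_mul, coeff_rescale, coeff_derivative, pow_succ]
  ring

lemma keyPS : bernoulliPowerSeries ℚ * myG
    = myG - X * (d⁄dX ℚ myG) - C (2⁻¹ : ℚ) * X * myG := by
  set B := bernoulliPowerSeries ℚ with hBdef
  set Exp := exp ℚ with hExpdef
  set E := rescale (2⁻¹ : ℚ) Exp with hEdef
  have hB : B * (Exp - 1) = X := bernoulliPowerSeries_mul_exp_sub_one ℚ
  have hE2 : E * E = Exp := by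
    rw [hEdef, exp_mul_exp_eq_exp_add]
    norm_num [hExpdef]
  have hR : rescale (2⁻¹ : ℚ) B * (E - 1) = C (2⁻¹ : ℚ) * X := by
    have := congrArg (rescale (2⁻¹ : ℚ)) hB
    simpa [map_mul, map_sub, rescale_X] using this
  have h2 : (C (2 : ℚ)) * (C (2⁻¹ : ℚ)) = 1 := by
    rw [← map_mul]; norm_num
  have hG1 : myG * (Exp - 1) = -(X * E) := by
    have hfact : Exp - 1 = (E - 1) * (E + 1) := by
      have : (E - 1) * (E + 1) = E * E - 1 := by ring
      rw [this, hE2]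
    calc myG * (Exp - 1) = B * (Exp - 1)
          - C (2 : ℚ) * (rescale (2⁻¹ : ℚ) B * (E - 1)) * (E + 1) := by
            rw [myG]; rw [hfact]; ring
      _ = X - C (2 : ℚ) * (C (2⁻¹ : ℚ) * X) * (E + 1) := by rw [hB, hR]
      _ = X - (C (2 : ℚ) * C (2⁻¹ : ℚ)) * X * (E + 1) := by ring
      _ = -(X * E) := by rw [h2]; ring
  have hE' : d⁄dX ℚ E = C (2⁻¹ : ℚ) * E := by
    rw [hEdef, hExpdef, derivative_rescale, derivative_exp']
  have hExp' : d⁄dX ℚ Exp = Exp := derivative_exp'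
  have hG' : (d⁄dX ℚ myG) * (Exp - 1) = -E - C (2⁻¹ : ℚ) * X * E - myG * Exp := by
    have hd := congrArg (d⁄dX ℚ) hG1
    rw [Derivation.leibniz, map_sub, map_neg, Derivation.leibniz, hExp', hE',
      derivative_X, Derivation.map_one_eq_zero] at hd
    simp only [smul_eq_mul, sub_zero, mul_one] at hd
    linear_combination hd
  have h22 : (C (2 : ℚ) : ℚ⟦X⟧) = 2 := map_ofNat C 2
  have hne : Exp - 1 ≠ 0 := by
    intro h
    have : (coeff 1) (Exp - 1) = 1 := by
      simp [hExpdef, coeff_exp, Nat.factorial]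
    rw [h] at this
    simp at this
  apply mul_right_cancel₀ hne
  apply mul_right_cancel₀ hne
  linear_combination (myG * (Exp - 1)) * hB
    + (X - (Exp - 1) - X * Exp + C (2⁻¹ : ℚ) * X * (Exp - 1)) * hG1
    + (X * (Exp - 1)) * hG'
    - (X * X * E * (Exp - 1)) * h2
    + (X * X * C (2⁻¹ : ℚ) * E * (Exp - 1)) * h22

lemma gg_odd {k : ℕ} (hk : Odd k) : gg k = 0 := by
  rcases eq_or_ne k 1 with h | h
  · subst h; norm_num [gg]
  · have h1 : 1 < k := by
      rcases hk with ⟨j, rfl⟩; omega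
    rw [gg, bernoulli_eq_bernoulli'_of_ne_one h, bernoulli'_eq_zero_of_odd hk h1, mul_zero]

lemma coeff_key (t : ℕ) :
    ∑ k ∈ Finset.range (2*t+3), gg k / (k.factorial : ℚ)
        * (bernoulli (2*t+2-k) / ((2*t+2-k).factorial : ℚ))
      = (1 - (2*t+2 : ℚ)) * (gg (2*t+2) / ((2*t+2).factorial : ℚ))
        - 2⁻¹ * (gg (2*t+1) / ((2*t+1).factorial : ℚ)) := by
  have h := congrArg (coeff (2*t+2)) keyPS
  rw [mul_comm (bernoulliPowerSeries ℚ) myG] at h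
  have e1 : (coeff (2*t+2)) (X * d⁄dX ℚ myG) = gg (2*t+2) / ((2*t+2).factorial : ℚ) * (2*t+2) := by
    have h1 := coeff_succ_X_mul (2*t+1) (d⁄dX ℚ myG)
    have h2 := coeff_derivative myG (2*t+1)
    rw [show 2*t+1+1 = 2*t+2 from rfl] at h1 h2
    rw [h1, h2, coeff_myG]
    push_cast
    ring
  have e2 : (coeff (2*t+2)) (C (2⁻¹ : ℚ) * X * myG) = 2⁻¹ * (gg (2*t+1) / ((2*t+1).factorial : ℚ)) := by
    rw [mul_assoc, coeff_C_mul]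
    have h1 := coeff_succ_X_mul (2*t+1) myG
    rw [show 2*t+1+1 = 2*t+2 from rfl] at h1
    rw [h1, coeff_myG]
  rw [map_sub, map_sub, e1, e2, coeff_mul,
    Finset.Nat.sum_antidiagonal_eq_sum_range_succ_mk, coeff_myG] at h
  simp only [coeff_myG, coeff_bps] at h
  rw [show (2*t+2).succ = 2*t+3 from rfl] at h
  rw [h]
  ring

lemma sum_key (t : ℕ) :
    ∑ k ∈ Finset.range (2*t+3), ((2*t+2).choose k : ℚ) * gg k * bernoulli (2*t+2-k)
      = (1 - (2*t+2 : ℚ)) * gg (2*t+2) := by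
  have hodd : gg (2*t+1) = 0 := gg_odd ⟨t, by ring⟩
  have h := coeff_key t
  rw [hodd] at h
  have hmain : ∑ k ∈ Finset.range (2*t+3), ((2*t+2).choose k : ℚ) * gg k * bernoulli (2*t+2-k)
      = ((2*t+2).factorial : ℚ) * ∑ k ∈ Finset.range (2*t+3),
          gg k / (k.factorial : ℚ) * (bernoulli (2*t+2-k) / (((2*t+2-k).factorial : ℚ))) := by
    rw [Finset.mul_sum]
    refine Finset.sum_congr rfl fun k hk => ?_
    have hk' : k ≤ 2*t+2 := by
      simp only [Finset.mem_range] at hk; omega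
    rw [Nat.cast_choose ℚ hk']
    have h1 : (k.factorial : ℚ) ≠ 0 := Nat.cast_ne_zero.mpr k.factorial_ne_zero
    have h2 : ((2*t+2-k).factorial : ℚ) ≠ 0 := Nat.cast_ne_zero.mpr (Nat.factorial_ne_zero _)
    field_simp
  rw [hmain, h]
  have h3 : ((2*t+2).factorial : ℚ) ≠ 0 := Nat.cast_ne_zero.mpr (Nat.factorial_ne_zero _)
  field_simp
  ring

lemma even_key (t : ℕ) :
    ∑ i ∈ Finset.range (t+2), ((2*t+2).choose (2*i) : ℚ) * gg (2*i) * bernoulli (2*t+2-2*i)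
      = (1 - (2*t+2 : ℚ)) * gg (2*t+2) := by
  rw [← sum_key t]
  have himg := Finset.sum_image (M := ℚ)
    (f := fun k => ((2*t+2).choose k : ℚ) * gg k * bernoulli (2*t+2-k))
    (g := fun i => 2*i) (s := Finset.range (t+2))
    (fun a _ b _ hab => Nat.eq_of_mul_eq_mul_left two_pos hab)
  have hsub : (Finset.range (t+2)).image (fun i => 2*i) ⊆ Finset.range (2*t+3) := by
    intro k hk
    simp only [Finset.mem_image, Finset.mem_range] at hk
    obtain ⟨j, hj, rfl⟩ := hk
    simp only [Finset.mem_range]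
    omega
  have hvan : ∀ k ∈ Finset.range (2*t+3), k ∉ (Finset.range (t+2)).image (fun i => 2*i) →
      ((2*t+2).choose k : ℚ) * gg k * bernoulli (2*t+2-k) = 0 := by
    intro k hk hnk
    simp only [Finset.mem_image, Finset.mem_range] at hk hnk
    have hko : Odd k := by
      by_contra hek
      rw [Nat.not_odd_iff_even] at hek
      obtain ⟨j, rfl⟩ := hek
      exact hnk ⟨j, by omega, by omega⟩
    rw [gg_odd hko, mul_zero, zero_mul]
  exact himg.symm.trans (Finset.sum_subset hsub hvan)

lemma bernoulli_two_mul_ne_zero {k : ℕ} (hk : k ≠ 0) : bernoulli (2*k) ≠ 0 := by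
  intro h
  have hsum := hasSum_zeta_nat (k := k) hk
  rw [h] at hsum
  norm_num at hsum
  have h1 := le_hasSum hsum 1 (fun j _ => by positivity)
  norm_num at h1

theorem stmt15 (s : ℕ) (hs : 1 ≤ s) :
    (2 * s * (s + 1)) / 3
      + (2 / 3) * ∑ i ∈ Finset.Icc 2 (s + 1),
          (Nat.choose (2 * (s + 1)) (2 * i) : ℚ)
            * (bernoulli (2 * (s + 1 - i)) * bernoulli (2 * i) / bernoulli (2 * (s + 1)))
            * ((1 - (2 : ℚ) ^ ((1 : ℤ) - 2 * i)) / (1 - (2 : ℚ) ^ ((1 : ℤ) - 2 * (s + 1))))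
    = (2 / 3) * ((s : ℚ) * (s - 1) - 1 + (1 - (2 : ℚ) ^ ((1 : ℤ) - 2 * (s + 1)))⁻¹)
      - (1 / 18) * (((s : ℚ) + 1) * (2 * s + 1) / (1 - (2 : ℚ) ^ ((1 : ℤ) - 2 * (s + 1))))
          * (bernoulli (2 * s) / bernoulli (2 * (s + 1))) := by
  have h21 : 2 * (s + 1) = 2 * s + 2 := by ring
  rw [h21]
  set D : ℚ := 1 - (2 : ℚ) ^ ((1 : ℤ) - 2 * ((s : ℤ) + 1)) with hDdef
  have hBm : bernoulli (2 * s + 2) ≠ 0 := by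
    rw [← h21]; exact bernoulli_two_mul_ne_zero (Nat.succ_ne_zero s)
  have hD : D ≠ 0 := by
    have hlt : (2 : ℚ) ^ ((1 : ℤ) - 2 * ((s : ℤ) + 1)) < 1 :=
      zpow_lt_one_of_neg₀ (by norm_num) (by omega)
    rw [hDdef]
    intro h
    rw [sub_eq_zero] at h
    rw [← h] at hlt
    exact lt_irrefl _ hlt
  -- gg value at top
  have hgg : gg (2 * s + 2) = D * bernoulli (2 * s + 2) := by
    rw [gg, hDdef]
    push_cast
    ring_nf
  -- rewrite the sum
  have hsum_eq : ∑ i ∈ Finset.Icc 2 (s + 1),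
          (Nat.choose (2 * s + 2) (2 * i) : ℚ)
            * (bernoulli (2 * (s + 1 - i)) * bernoulli (2 * i) / bernoulli (2 * s + 2))
            * ((1 - (2 : ℚ) ^ ((1 : ℤ) - 2 * i)) / D)
      = (∑ i ∈ Finset.Icc 2 (s + 1),
          ((2*s+2).choose (2*i) : ℚ) * gg (2*i) * bernoulli (2*s+2-2*i))
          * ((bernoulli (2 * s + 2))⁻¹ * D⁻¹) := by
    rw [Finset.sum_mul]
    refine Finset.sum_congr rfl fun i hi => ?_
    rw [Finset.mem_Icc] at hi
    have hidx : 2 * (s + 1 - i) = 2 * s + 2 - 2 * i := by omega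
    rw [hidx, gg]
    push_cast
    rw [div_eq_mul_inv, div_eq_mul_inv]
    ring
  rw [hsum_eq]
  -- split even_key sum
  have hkey := even_key s
  rw [Finset.range_eq_Ico, ← Finset.sum_Ico_consecutive _ (by omega : 0 ≤ 2) (by omega : 2 ≤ s + 2)]
    at hkey
  have h02 : ∑ i ∈ Finset.Ico 0 2, ((2*s+2).choose (2*i) : ℚ) * gg (2*i) * bernoulli (2*s+2-2*i)
      = - bernoulli (2*s+2) + ((s : ℚ) + 1) * (2 * s + 1) * (1/12) * bernoulli (2*s) := by
    rw [show Finset.Ico 0 2 = Finset.range 2 from rfl, Finset.sum_range_succ, Finset.sum_range_one]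
    have hg0 : gg 0 = -1 := by norm_num [gg, bernoulli_zero]
    have hg2 : gg 2 = 1/12 := by
      rw [gg, bernoulli_eq_bernoulli'_of_ne_one (by norm_num), bernoulli'_two]
      norm_num
    have hc2 : (((2*s+2).choose 2 : ℕ) : ℚ) = ((s : ℚ) + 1) * (2 * s + 1) := by
      rw [Nat.cast_choose_two]
      push_cast
      ring
    rw [hg0, hg2, hc2]
    have hidx0 : 2*s+2 - 2*0 = 2*s+2 := by omega
    have hidx1 : 2*s+2 - 2*1 = 2*s := by omega
    rw [hidx0, hidx1]
    norm_num
  have hIcc : Finset.Ico 2 (s+2) = Finset.Icc 2 (s+1) := by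
    rw [show s+2 = s+1+1 from rfl, Finset.Ico_add_one_right_eq_Icc]
  rw [hIcc, h02] at hkey
  -- hkey : -Bm + c*B2s + S = (1 - (2s+2)) * gg(2s+2)
  have hS : ∑ i ∈ Finset.Icc 2 (s + 1),
        ((2*s+2).choose (2*i) : ℚ) * gg (2*i) * bernoulli (2*s+2-2*i)
      = (1 - (2*(s:ℚ)+2)) * (D * bernoulli (2*s+2))
        + bernoulli (2*s+2) - ((s : ℚ) + 1) * (2 * s + 1) * (1/12) * bernoulli (2*s) := by
    rw [← hgg]
    linarith [hkey]
  rw [hS]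
  field_simp
  ring
end
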